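/- Let Mᵦ = [[1, b],[0, 1]] and Bⱼ = -Mᵦ + (α/(2j))I + Dⱼ where Dⱼ is a diagonal matrix with ‖Dⱼ‖ = O(j^{-2}). Then Mᵦ^{-j}(-Bⱼ)Mᵦ^{j-1} = I - (α/(2j))[[1, -b],[0, 1]] + Eⱼ, where Eⱼ is upper triangular with (1,1)- and (2,2)-entries O(j^{-2}), (2,1)-entry 0, and (1,2)-entry O(j^{-1}). -/

import Mathlib

/-- with `Mᵦ = [[1,b],[0,1]]` (so `Mᵦᵏ = [[1,bk],[0,1]]`, `k ∈ ℤ`) and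
`Bⱼ = -Mᵦ + (α/(2j))I + Dⱼ`, `Dⱼ` diagonal with `‖Dⱼ‖ = O(j⁻²)`, one has
`Mᵦ^{-j}(-Bⱼ)Mᵦ^{j-1} = I - (α/(2j))[[1,-b],[0,1]] + Eⱼ` where `Eⱼ` is upper
triangular, diagonal entries `O(j⁻²)` and the `(1,2)`-entry `O(j⁻¹)`. -/
theorem stmt11 (b α : ℝ) (hb : 0 < b) (h0 : 0 < α) (h1 : α ≤ 1)
    (D : ℕ → Matrix (Fin 2) (Fin 2) ℝ)
    (hDdiag : ∀ j, D j 0 1 = 0 ∧ D j 1 0 = 0)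
    (CD : ℝ) (hD : ∀ j : ℕ, 1 ≤ j → ∀ i : Fin 2, |D j i i| ≤ CD / (j : ℝ) ^ 2)
    (B : ℕ → Matrix (Fin 2) (Fin 2) ℝ)
    (hB : ∀ j : ℕ, 1 ≤ j →
      B j = -(!![1, b; 0, 1]) + (α / (2 * (j : ℝ))) • (1 : Matrix (Fin 2) (Fin 2) ℝ) + D j)
    (Mp : ℤ → Matrix (Fin 2) (Fin 2) ℝ)
    (hMp : ∀ k : ℤ, Mp k = !![1, b * (k : ℝ); 0, 1]) :
    ∃ C' : ℝ, ∀ j : ℕ, 1 ≤ j → ∃ Er : Matrix (Fin 2) (Fin 2) ℝ,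
      Mp (-(j : ℤ)) * (-(B j)) * Mp ((j : ℤ) - 1)
        = 1 - (α / (2 * (j : ℝ))) • !![1, -b; 0, 1] + Er ∧
      Er 1 0 = 0 ∧ |Er 0 0| ≤ C' / (j : ℝ) ^ 2 ∧ |Er 1 1| ≤ C' / (j : ℝ) ^ 2 ∧
      |Er 0 1| ≤ C' / (j : ℝ) := by
  refine ⟨CD * (1 + 2 * b), fun j hj => ?_⟩
  have hj1 : (1:ℝ) ≤ (j:ℝ) := by exact_mod_cast hj
  have hjpos : (0:ℝ) < (j:ℝ) := by linarith
  have hj2 : (0:ℝ) < (j:ℝ)^2 := by positivity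
  have hCD : 0 ≤ CD := by
    have h2 : (0:ℝ) ≤ CD / (j:ℝ)^2 := le_trans (abs_nonneg _) (hD j hj 0)
    have : CD = CD / (j:ℝ)^2 * (j:ℝ)^2 := (div_mul_cancel₀ _ hj2.ne').symm
    nlinarith
  set d0 := D j 0 0 with hd0
  set d1 := D j 1 1 with hd1
  have hDm : D j = !![d0, 0; 0, d1] := by
    ext i k
    fin_cases i <;> fin_cases k <;>
      simp [(hDdiag j).1, (hDdiag j).2, ← hd0, ← hd1]
  refine ⟨!![-d0, b * ((j:ℝ) * d1 - ((j:ℝ) - 1) * d0); 0, -d1], ?_, ?_, ?_, ?_, ?_⟩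
  · rw [hB j hj, hMp, hMp, hDm]
    ext i k
    fin_cases i <;> fin_cases k <;>
      simp [Matrix.mul_apply, Fin.sum_univ_two, Matrix.vecMul, Matrix.vecHead,
        Matrix.vecTail, Matrix.one_apply] <;>
    push_cast <;> ring
  · simp
  · have e : (!![-d0, b * ((j:ℝ) * d1 - ((j:ℝ) - 1) * d0); 0, -d1] :
        Matrix (Fin 2) (Fin 2) ℝ) 0 0 = -d0 := by simp
    rw [e, abs_neg]
    refine (hD j hj 0).trans ?_
    gcongr
    nlinarith [mul_nonneg hCD hb.le]
  · have e : (!![-d0, b * ((j:ℝ) * d1 - ((j:ℝ) - 1) * d0); 0, -d1] :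
        Matrix (Fin 2) (Fin 2) ℝ) 1 1 = -d1 := by simp
    rw [e, abs_neg]
    refine (hD j hj 1).trans ?_
    gcongr
    nlinarith [mul_nonneg hCD hb.le]
  · have e : (!![-d0, b * ((j:ℝ) * d1 - ((j:ℝ) - 1) * d0); 0, -d1] :
        Matrix (Fin 2) (Fin 2) ℝ) 0 1 = b * ((j:ℝ) * d1 - ((j:ℝ) - 1) * d0) := by simp
    rw [e]
    have hq : (j:ℝ) * (CD/(j:ℝ)^2) = CD / (j:ℝ) := by
      field_simp
    have hb0 : |b * ((j:ℝ) * d1 - ((j:ℝ) - 1) * d0)|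
        ≤ b * (CD/(j:ℝ) + CD/(j:ℝ)) := by
      rw [abs_mul, abs_of_pos hb]
      apply mul_le_mul_of_nonneg_left ?_ hb.le
      calc |(j:ℝ) * d1 - ((j:ℝ) - 1) * d0| ≤ |(j:ℝ) * d1| + |((j:ℝ)-1) * d0| := abs_sub _ _
        _ ≤ (j:ℝ) * (CD/(j:ℝ)^2) + (j:ℝ) * (CD/(j:ℝ)^2) := by
            rw [abs_mul, abs_mul, abs_of_pos hjpos]
            gcongr
            · exact hD j hj 1
            · rw [abs_le]; constructor <;> linarith
            · exact hD j hj 0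
        _ = CD/(j:ℝ) + CD/(j:ℝ) := by rw [hq]
    refine hb0.trans ?_
    rw [show b * (CD/(j:ℝ) + CD/(j:ℝ)) = (2*b*CD) / (j:ℝ) by ring,
      div_le_div_iff₀ hjpos hjpos]
    nlinarith [mul_nonneg hCD hjpos.le]
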